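/- Let σ : [0,1] → ℝ be measurable with 0 < s1 ≤ σ(u) ≤ s2 for all u ∈ [0,1], let T(t) = ∫_0^t σ²(u) du, ρ = T(1), τ = T(t), and let c1 < c2 be real numbers. For x ∈ ℝ and t ∈ [0,1) set z1 = (c1 - x)/√(ρ - τ), z2 = (c2 - x)/√(ρ - τ), and I(x,t) = (Φ'(z1) - Φ'(z2))² / ( √(ρ - τ) · (Φ(z2) - Φ(z1)) · (Φ(-z2) + Φ(z1)) ). Then the integrals ∫_{-∞}^{∞} I(x,t) dx are uniformly bounded in t ∈ [0,1): there exists a constant C such that ∫_ℝ I(x,t) dx ≤ C for every t ∈ [0,1). -/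

import Mathlib

open MeasureTheory Real Set Filter

/-- The standard normal density `Φ'(z) = (1/√(2π)) e^{-z²/2}`. -/
noncomputable def Φ' (z : ℝ) : ℝ := (Real.sqrt (2 * Real.pi))⁻¹ * Real.exp (-z ^ 2 / 2)

/-- The standard normal cumulative distribution function `Φ`. -/
noncomputable def Φ (z : ℝ) : ℝ := ∫ u in Set.Iic z, Φ' u


lemma phi'_pos (z : ℝ) : 0 < Φ' z := by
  apply mul_pos (inv_pos.2 (Real.sqrt_pos.2 (by positivity))) (Real.exp_pos _)

lemma phi'_cont : Continuous Φ' := by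
  unfold Φ'; fun_prop

lemma phi'_int : Integrable Φ' := by
  unfold Φ'
  apply Integrable.const_mul
  have := integrable_exp_neg_mul_sq (b := (1/2:ℝ)) (by norm_num)
  convert this using 2 with x
  ring_nf

lemma phi'_total : ∫ z, Φ' z = 1 := by
  unfold Φ'
  rw [integral_const_mul]
  have := integral_gaussian (1/2)
  have h2 : ∀ x : ℝ, -x^2/2 = -(1/2) * x^2 := by intro x; ring
  simp_rw [h2]
  rw [this]
  rw [show (π / (1/2)) = 2 * π by ring]
  rw [inv_mul_cancel₀ (by positivity)]

lemma phi'_even (z : ℝ) : Φ' (-z) = Φ' z := by simp [Φ']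

-- Φ' a ≤ Φ' b iff b² ≤ a²
lemma phi'_le (a b : ℝ) (h : b^2 ≤ a^2) : Φ' a ≤ Φ' b := by
  unfold Φ'
  have : Real.exp (-a^2/2) ≤ Real.exp (-b^2/2) := Real.exp_le_exp.2 (by linarith)
  have h0 : (0:ℝ) ≤ (Real.sqrt (2*Real.pi))⁻¹ := by positivity
  exact mul_le_mul_of_nonneg_left this h0

lemma phi'_ratio (a b : ℝ) : Φ' a = Φ' b * Real.exp ((b^2 - a^2)/2) := by
  unfold Φ'
  rw [mul_assoc, ← Real.exp_add]
  ring_nf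


lemma Φ_sub {a b : ℝ} (h : a ≤ b) : Φ b - Φ a = ∫ x in a..b, Φ' x := by
  exact intervalIntegral.integral_Iic_sub_Iic phi'_int.integrableOn phi'_int.integrableOn

lemma L1 {a b : ℝ} (h : a ≤ b) : (b - a) * min (Φ' a) (Φ' b) ≤ Φ b - Φ a := by
  rw [Φ_sub h]
  have : ∫ x in a..b, min (Φ' a) (Φ' b) ≤ ∫ x in a..b, Φ' x := by
    apply intervalIntegral.integral_mono_on h
    · exact intervalIntegrable_const
    · exact phi'_int.intervalIntegrable
    · intro u hu
      rcases hu with ⟨hau, hub⟩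
      have : u^2 ≤ a^2 ∨ u^2 ≤ b^2 := by
        rcases le_total 0 u with hu0 | hu0
        · right; nlinarith
        · left; nlinarith
      rcases this with h1 | h1
      · exact le_trans (min_le_left _ _) (phi'_le a u h1)
      · exact le_trans (min_le_right _ _) (phi'_le b u h1)
  simpa using this

lemma Φ_strict {a b : ℝ} (h : a < b) : Φ a < Φ b := by
  have := L1 h.le
  have hm : 0 < min (Φ' a) (Φ' b) := lt_min (phi'_pos a) (phi'_pos b)
  nlinarith

lemma Φ_nonneg (z : ℝ) : 0 ≤ Φ z :=
  setIntegral_nonneg measurableSet_Iic (fun x _ => (phi'_pos x).le)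

lemma Φ_pos (z : ℝ) : 0 < Φ z :=
  lt_of_lt_of_le (by nlinarith [Φ_strict (show z - 1 < z by linarith), Φ_nonneg (z-1)])
    le_rfl

lemma Φ_neg_add (z : ℝ) : Φ (-z) + Φ z = 1 := by
  have h1 : Φ (-z) = ∫ x in Ioi z, Φ' x := by
    unfold Φ
    have : ∫ x in Iic (-z), Φ' x = ∫ x in Iic (-z), Φ' (-x) := by
      congr 1; ext x; rw [phi'_even]
    rw [this, integral_comp_neg_Iic, neg_neg]
  rw [h1, add_comm]
  rw [show Φ z = ∫ x in Iic z, Φ' x from rfl]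
  rw [intervalIntegral.integral_Iic_add_Ioi phi'_int.integrableOn phi'_int.integrableOn]
  exact phi'_total

lemma Φ_cont : Continuous Φ := by
  have : ∀ z, Φ z = Φ 0 + ∫ x in (0:ℝ)..z, Φ' x := by
    intro z
    rcases le_total 0 z with h | h
    · rw [← Φ_sub h]; ring
    · rw [intervalIntegral.integral_symm, ← Φ_sub h]; ring
  have hc : Continuous fun z => Φ 0 + ∫ x in (0:ℝ)..z, Φ' x :=
    continuous_const.add (phi'_int.continuous_primitive 0)
  exact hc.congr (fun z => (this z).symm)

lemma Φ_mono {a b : ℝ} (h : a ≤ b) : Φ a ≤ Φ b := by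
  rcases eq_or_lt_of_le h with rfl | h
  · exact le_refl _
  · exact (Φ_strict h).le

lemma Φ_zero : Φ 0 = 1/2 := by
  have := Φ_neg_add 0
  rw [neg_zero] at this; linarith

lemma Φ_le_one (z : ℝ) : Φ z ≤ 1 := by
  have := Φ_neg_add z
  have := Φ_nonneg (-z)
  linarith

lemma phi'_le_one (z : ℝ) : Φ' z ≤ 1 := by
  unfold Φ'
  have h1 : Real.exp (-z^2/2) ≤ 1 := by
    rw [Real.exp_le_one_iff]; nlinarith [sq_nonneg z]
  have h2 : (Real.sqrt (2*Real.pi))⁻¹ ≤ 1 := by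
    rw [inv_le_one_iff₀]
    right
    rw [show (1:ℝ) = Real.sqrt 1 by simp]
    exact Real.sqrt_le_sqrt (by nlinarith [Real.pi_gt_three])
  calc (Real.sqrt (2*Real.pi))⁻¹ * Real.exp (-z^2/2) ≤ 1 * 1 := by
        apply mul_le_mul h2 h1 (le_of_lt (Real.exp_pos _)) (by norm_num)
    _ = 1 := by norm_num

/-- crude lower tail bound: for `z ≤ 0`, `Φ z ≥ Φ'(z) e^{z - 1/2}`. -/
lemma L2 {z : ℝ} (hz : z ≤ 0) : Φ' z * Real.exp (z - 1/2) ≤ Φ z := by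
  have hle : Φ' (z - 1) ≤ Φ' z := phi'_le (z-1) z (by nlinarith)
  have hmin : min (Φ' (z-1)) (Φ' z) = Φ' (z-1) := min_eq_left hle
  have h2 : (1:ℝ) * Φ' (z-1) ≤ Φ z - Φ (z-1) := by
    have := L1 (show z - 1 ≤ z by linarith)
    rw [hmin, show z - (z-1) = (1:ℝ) by ring] at this
    exact this
  have h3 : Φ' (z-1) = Φ' z * Real.exp (z - 1/2) := by
    rw [phi'_ratio (z-1) z, show (z^2 - (z-1)^2)/2 = z - 1/2 by ring]
  have := Φ_nonneg (z-1)
  linarith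

noncomputable def hfun (z : ℝ) : ℝ := Φ' z * Real.exp |z|

lemma hfun_nonneg (z : ℝ) : 0 ≤ hfun z := le_of_lt (mul_pos (phi'_pos z) (Real.exp_pos _))

set_option maxHeartbeats 1000000 in
/-- Master pointwise inequality. -/
lemma master (δ0 : ℝ) (hδ0 : 0 < δ0) : ∃ K : ℝ, 0 ≤ K ∧ ∀ z1 z2 : ℝ, z1 + δ0 ≤ z2 →
    (Φ' z1 - Φ' z2)^2 ≤ K * (hfun z1 + hfun z2) * ((Φ z2 - Φ z1) * (Φ (-z2) + Φ z1)) := by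
  set η : ℝ := min δ0 1 with hηdef
  have hη0 : 0 < η := lt_min hδ0 one_pos
  have hη1 : η ≤ 1 := min_le_right _ _
  have hηδ : η ≤ δ0 := min_le_left _ _
  have hΦ0 : 0 < Φ 0 := Φ_pos 0
  have hΦ'1 : 0 < Φ' 1 := phi'_pos 1
  set cA : ℝ := Real.exp (1/2) / (η * Φ 0) with hcA
  set cB : ℝ := 2 * Real.exp (1/2) / (η/2 * Φ' 1) with hcB
  have hcAp : 0 < cA := div_pos (Real.exp_pos _) (mul_pos hη0 hΦ0)
  have hcBp : 0 < cB := div_pos (by positivity) (mul_pos (by linarith) hΦ'1)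
  refine ⟨cA + cB, by positivity, ?_⟩
  intro z1 z2 hz
  have hz12 : z1 < z2 := by linarith
  have hD : 0 < Φ z2 - Φ z1 := sub_pos.2 (Φ_strict hz12)
  have hE : 0 < Φ (-z2) + Φ z1 := add_pos (Φ_pos _) (Φ_pos _)
  have hh1 : 0 ≤ hfun z1 := hfun_nonneg z1
  have hh2 : 0 ≤ hfun z2 := hfun_nonneg z2
  have lift : ∀ c : ℝ, 0 ≤ c → c ≤ cA + cB →
      (Φ' z1 - Φ' z2)^2 ≤ c * (hfun z1 + hfun z2) * ((Φ z2 - Φ z1) * (Φ (-z2) + Φ z1)) →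
      (Φ' z1 - Φ' z2)^2 ≤ (cA+cB) * (hfun z1 + hfun z2) * ((Φ z2 - Φ z1) * (Φ (-z2) + Φ z1)) := by
    intro c hc hcle hbd
    refine le_trans hbd ?_
    apply mul_le_mul_of_nonneg_right ?_ (by positivity)
    exact mul_le_mul_of_nonneg_right hcle (by positivity)
  rcases le_or_gt 0 z1 with hz1 | hz1
  · -- Region 1 : 0 ≤ z1
    apply lift cA hcAp.le (by linarith)
    have hz2 : 0 ≤ z2 := le_trans hz1 hz12.le
    have hNle : Φ' z2 ≤ Φ' z1 := phi'_le z2 z1 (by nlinarith)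
    have hN2 : (Φ' z1 - Φ' z2)^2 ≤ Φ' z1 ^ 2 := by nlinarith [phi'_pos z2]
    have hd1 : Φ' (z1+1) ≤ Φ' z1 := phi'_le (z1+1) z1 (by nlinarith)
    have hd2 : Φ' (z1+1) ≤ Φ' (z1+η) := phi'_le (z1+1) (z1+η) (by nlinarith)
    have hmin : Φ' (z1+1) ≤ min (Φ' z1) (Φ' (z1+η)) := le_min hd1 hd2
    have hDlb : η * Φ' (z1+1) ≤ Φ z2 - Φ z1 := by
      have hL := L1 (show z1 ≤ z1 + η by linarith)
      have h' : η * Φ' (z1+1) ≤ (z1 + η - z1) * min (Φ' z1) (Φ' (z1+η)) := by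
        rw [show z1 + η - z1 = η by ring]
        exact mul_le_mul_of_nonneg_left hmin hη0.le
      have hmono : Φ (z1+η) ≤ Φ z2 := Φ_mono (by linarith)
      linarith
    have hElb : Φ 0 ≤ Φ (-z2) + Φ z1 := by
      have := Φ_mono hz1
      have := Φ_nonneg (-z2)
      linarith
    have hratio : Φ' z1 = Φ' (z1+1) * Real.exp (z1 + 1/2) := by
      rw [phi'_ratio z1 (z1+1), show ((z1+1)^2 - z1^2)/2 = z1 + 1/2 by ring]
    have hfz1 : hfun z1 = Φ' z1 * Real.exp z1 := by rw [hfun, abs_of_nonneg hz1]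
    have hsplit : Real.exp (z1 + 1/2) = Real.exp z1 * Real.exp (1/2) := by
      rw [← Real.exp_add]
    have key : Φ' z1 ^ 2 = Real.exp (1/2) * hfun z1 * Φ' (z1+1) := by
      calc Φ' z1 ^ 2 = Φ' z1 * Φ' z1 := sq (Φ' z1)
        _ = Φ' z1 * (Φ' (z1+1) * (Real.exp z1 * Real.exp (1/2))) := by
            rw [← hsplit, ← hratio]
        _ = Real.exp (1/2) * (Φ' z1 * Real.exp z1) * Φ' (z1+1) := by ring
        _ = Real.exp (1/2) * hfun z1 * Φ' (z1+1) := by rw [hfz1]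
    calc (Φ' z1 - Φ' z2)^2 ≤ Φ' z1 ^ 2 := hN2
      _ = Real.exp (1/2) * hfun z1 * Φ' (z1+1) := key
      _ = cA * hfun z1 * (η * Φ' (z1+1) * Φ 0) := by
          rw [hcA]; field_simp
      _ ≤ cA * hfun z1 * ((Φ z2 - Φ z1) * (Φ (-z2) + Φ z1)) := by
          apply mul_le_mul_of_nonneg_left ?_ (by positivity)
          calc η * Φ' (z1+1) * Φ 0 ≤ (Φ z2 - Φ z1) * Φ 0 :=
                mul_le_mul_of_nonneg_right hDlb hΦ0.le
            _ ≤ (Φ z2 - Φ z1) * (Φ (-z2) + Φ z1) :=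
                mul_le_mul_of_nonneg_left hElb hD.le
      _ ≤ cA * (hfun z1 + hfun z2) * ((Φ z2 - Φ z1) * (Φ (-z2) + Φ z1)) := by
          apply mul_le_mul_of_nonneg_right ?_ (by positivity)
          apply mul_le_mul_of_nonneg_left (by linarith) hcAp.le
  rcases le_or_gt z2 0 with hz2 | hz2
  · -- Region 3 : z2 ≤ 0
    apply lift cA hcAp.le (by linarith)
    have hz1' : z1 ≤ 0 := le_trans hz12.le hz2
    have hNle : Φ' z1 ≤ Φ' z2 := phi'_le z1 z2 (by nlinarith)
    have hN2 : (Φ' z1 - Φ' z2)^2 ≤ Φ' z2 ^ 2 := by nlinarith [phi'_pos z1]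
    have hd1 : Φ' (z2-1) ≤ Φ' z2 := phi'_le (z2-1) z2 (by nlinarith)
    have hd2 : Φ' (z2-1) ≤ Φ' (z2-η) := phi'_le (z2-1) (z2-η) (by nlinarith)
    have hmin : Φ' (z2-1) ≤ min (Φ' (z2-η)) (Φ' z2) := le_min hd2 hd1
    have hDlb : η * Φ' (z2-1) ≤ Φ z2 - Φ z1 := by
      have hL := L1 (show z2 - η ≤ z2 by linarith)
      have h' : η * Φ' (z2-1) ≤ (z2 - (z2 - η)) * min (Φ' (z2-η)) (Φ' z2) := by
        rw [show z2 - (z2-η) = η by ring]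
        exact mul_le_mul_of_nonneg_left hmin hη0.le
      have hmono : Φ z1 ≤ Φ (z2-η) := Φ_mono (by linarith)
      linarith
    have hElb : Φ 0 ≤ Φ (-z2) + Φ z1 := by
      have := Φ_mono (show (0:ℝ) ≤ -z2 by linarith)
      have := Φ_nonneg z1
      linarith
    have hratio : Φ' z2 = Φ' (z2-1) * Real.exp (-z2 + 1/2) := by
      rw [phi'_ratio z2 (z2-1), show ((z2-1)^2 - z2^2)/2 = -z2 + 1/2 by ring]
    have hfz2 : hfun z2 = Φ' z2 * Real.exp (-z2) := by rw [hfun, abs_of_nonpos hz2]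
    have hsplit : Real.exp (-z2 + 1/2) = Real.exp (-z2) * Real.exp (1/2) := by
      rw [← Real.exp_add]
    have key : Φ' z2 ^ 2 = Real.exp (1/2) * hfun z2 * Φ' (z2-1) := by
      calc Φ' z2 ^ 2 = Φ' z2 * Φ' z2 := sq (Φ' z2)
        _ = Φ' z2 * (Φ' (z2-1) * (Real.exp (-z2) * Real.exp (1/2))) := by
            rw [← hsplit, ← hratio]
        _ = Real.exp (1/2) * (Φ' z2 * Real.exp (-z2)) * Φ' (z2-1) := by ring
        _ = Real.exp (1/2) * hfun z2 * Φ' (z2-1) := by rw [hfz2]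
    calc (Φ' z1 - Φ' z2)^2 ≤ Φ' z2 ^ 2 := hN2
      _ = Real.exp (1/2) * hfun z2 * Φ' (z2-1) := key
      _ = cA * hfun z2 * (η * Φ' (z2-1) * Φ 0) := by
          rw [hcA]; field_simp
      _ ≤ cA * hfun z2 * ((Φ z2 - Φ z1) * (Φ (-z2) + Φ z1)) := by
          apply mul_le_mul_of_nonneg_left ?_ (by positivity)
          calc η * Φ' (z2-1) * Φ 0 ≤ (Φ z2 - Φ z1) * Φ 0 :=
                mul_le_mul_of_nonneg_right hDlb hΦ0.le
            _ ≤ (Φ z2 - Φ z1) * (Φ (-z2) + Φ z1) :=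
                mul_le_mul_of_nonneg_left hElb hD.le
      _ ≤ cA * (hfun z1 + hfun z2) * ((Φ z2 - Φ z1) * (Φ (-z2) + Φ z1)) := by
          apply mul_le_mul_of_nonneg_right ?_ (by positivity)
          apply mul_le_mul_of_nonneg_left (by linarith) hcAp.le
  · -- Region 2 : z1 < 0 < z2
    apply lift cB hcBp.le (by linarith)
    have hDlb : η/2 * Φ' 1 ≤ Φ z2 - Φ z1 := by
      rcases le_or_gt (η/2) z2 with hcase | hcase
      · have hL := L1 (show (0:ℝ) ≤ η/2 by linarith)
        have hmin : Φ' 1 ≤ min (Φ' 0) (Φ' (η/2)) :=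
          le_min (phi'_le 1 0 (by norm_num)) (phi'_le 1 (η/2) (by nlinarith))
        have h' : η/2 * Φ' 1 ≤ (η/2 - 0) * min (Φ' 0) (Φ' (η/2)) := by
          rw [show η/2 - 0 = η/2 by ring]
          exact mul_le_mul_of_nonneg_left hmin (by linarith)
        have h1 : Φ (η/2) ≤ Φ z2 := Φ_mono hcase
        have h2 : Φ z1 ≤ Φ 0 := Φ_mono hz1.le
        linarith
      · have hz1' : z1 ≤ -(η/2) := by linarith
        have hL := L1 (show -(η/2) ≤ (0:ℝ) by linarith)
        have hmin : Φ' 1 ≤ min (Φ' (-(η/2))) (Φ' 0) :=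
          le_min (phi'_le 1 (-(η/2)) (by nlinarith)) (phi'_le 1 0 (by norm_num))
        have h' : η/2 * Φ' 1 ≤ (0 - -(η/2)) * min (Φ' (-(η/2))) (Φ' 0) := by
          rw [show (0:ℝ) - -(η/2) = η/2 by ring]
          exact mul_le_mul_of_nonneg_left hmin (by linarith)
        have h1 : Φ 0 ≤ Φ z2 := Φ_mono hz2.le
        have h2 : Φ z1 ≤ Φ (-(η/2)) := Φ_mono hz1'
        linarith
    -- tail bounds
    have hfz1 : hfun z1 = Φ' z1 * Real.exp (-z1) := by
      rw [hfun, abs_of_nonpos hz1.le]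
    have hfz2 : hfun z2 = Φ' z2 * Real.exp z2 := by
      rw [hfun, abs_of_nonneg hz2.le]
    have bound1 : Φ' z1 ^ 2 ≤ Real.exp (1/2) * hfun z1 * Φ z1 := by
      have hL2 := L2 hz1.le
      have step := mul_le_mul_of_nonneg_right hL2
        (show (0:ℝ) ≤ Φ' z1 * Real.exp (-z1 + 1/2) from
          le_of_lt (mul_pos (phi'_pos z1) (Real.exp_pos _)))
      have lhs_eq : Φ' z1 * Real.exp (z1 - 1/2) * (Φ' z1 * Real.exp (-z1 + 1/2))
          = Φ' z1 ^ 2 := by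
        rw [show Φ' z1 * Real.exp (z1-1/2) * (Φ' z1 * Real.exp (-z1+1/2))
            = Φ' z1^2 * (Real.exp (z1-1/2) * Real.exp (-z1+1/2)) by ring,
          ← Real.exp_add]
        norm_num
      have rhs_eq : Φ z1 * (Φ' z1 * Real.exp (-z1 + 1/2))
          = Real.exp (1/2) * hfun z1 * Φ z1 := by
        rw [hfz1, Real.exp_add]; ring
      rw [lhs_eq, rhs_eq] at step
      exact step
    have bound2 : Φ' z2 ^ 2 ≤ Real.exp (1/2) * hfun z2 * Φ (-z2) := by
      have hL2 := L2 (show -z2 ≤ 0 by linarith)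
      rw [phi'_even] at hL2
      have step := mul_le_mul_of_nonneg_right hL2
        (show (0:ℝ) ≤ Φ' z2 * Real.exp (z2 + 1/2) from
          le_of_lt (mul_pos (phi'_pos z2) (Real.exp_pos _)))
      have lhs_eq : Φ' z2 * Real.exp (-z2 - 1/2) * (Φ' z2 * Real.exp (z2 + 1/2))
          = Φ' z2 ^ 2 := by
        rw [show Φ' z2 * Real.exp (-z2-1/2) * (Φ' z2 * Real.exp (z2+1/2))
            = Φ' z2^2 * (Real.exp (-z2-1/2) * Real.exp (z2+1/2)) by ring,
          ← Real.exp_add]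
        norm_num
      have rhs_eq : Φ (-z2) * (Φ' z2 * Real.exp (z2 + 1/2))
          = Real.exp (1/2) * hfun z2 * Φ (-z2) := by
        rw [hfz2, Real.exp_add]; ring
      rw [lhs_eq, rhs_eq] at step
      exact step
    have hN2 : (Φ' z1 - Φ' z2)^2 ≤ 2 * Φ' z1 ^2 + 2 * Φ' z2 ^2 := by
      nlinarith [sq_nonneg (Φ' z1 + Φ' z2)]
    have hEineq1 : Φ z1 ≤ Φ (-z2) + Φ z1 := le_add_of_nonneg_left (Φ_nonneg _)
    have hEineq2 : Φ (-z2) ≤ Φ (-z2) + Φ z1 := le_add_of_nonneg_right (Φ_nonneg _)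
    have step1 : (Φ' z1 - Φ' z2)^2
        ≤ 2 * Real.exp (1/2) * (hfun z1 + hfun z2) * (Φ (-z2) + Φ z1) := by
      have b1 : hfun z1 * Φ z1 ≤ hfun z1 * (Φ (-z2) + Φ z1) :=
        mul_le_mul_of_nonneg_left hEineq1 hh1
      have b2 : hfun z2 * Φ (-z2) ≤ hfun z2 * (Φ (-z2) + Φ z1) :=
        mul_le_mul_of_nonneg_left hEineq2 hh2
      have e2 : (0:ℝ) < Real.exp (1/2) := Real.exp_pos _
      nlinarith [bound1, bound2]
    have hc2d : cB * (η/2 * Φ' 1) = 2 * Real.exp (1/2) := by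
      rw [hcB]; field_simp
    calc (Φ' z1 - Φ' z2)^2
        ≤ 2 * Real.exp (1/2) * (hfun z1 + hfun z2) * (Φ (-z2) + Φ z1) := step1
      _ = cB * (hfun z1 + hfun z2) * ((η/2 * Φ' 1) * (Φ (-z2) + Φ z1)) := by
          rw [← hc2d]; ring
      _ ≤ cB * (hfun z1 + hfun z2) * ((Φ z2 - Φ z1) * (Φ (-z2) + Φ z1)) := by
          apply mul_le_mul_of_nonneg_left ?_ (by positivity)
          exact mul_le_mul_of_nonneg_right hDlb hE.le

lemma hfun_cont : Continuous hfun :=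
  phi'_cont.mul (Real.continuous_exp.comp continuous_abs)

lemma hfun_int : Integrable hfun := by
  apply Integrable.mono'
    ((integrable_exp_neg_mul_sq (by norm_num : (0:ℝ) < 1/4)).const_mul (Real.exp 1))
  · exact hfun_cont.aestronglyMeasurable
  · refine ae_of_all _ fun z => ?_
    rw [Real.norm_eq_abs, abs_of_nonneg (hfun_nonneg z)]
    have h1 : Φ' z ≤ Real.exp (-z^2/2) := by
      unfold Φ'
      apply mul_le_of_le_one_left (le_of_lt (Real.exp_pos _))
      rw [inv_le_one_iff₀]
      right
      rw [show (1:ℝ) = Real.sqrt 1 by simp]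
      exact Real.sqrt_le_sqrt (by nlinarith [Real.pi_gt_three])
    have h2 : hfun z ≤ Real.exp (-z^2/2) * Real.exp |z| :=
      mul_le_mul_of_nonneg_right h1 (le_of_lt (Real.exp_pos _))
    refine le_trans h2 ?_
    rw [← Real.exp_add, ← Real.exp_add]
    apply Real.exp_le_exp.2
    nlinarith [sq_nonneg (|z| - 2), sq_abs z]

/-- `I(x,t)` of the paper: with `T(t) = ∫_0^t σ²`, `ρ = T(1)`, `τ = T(t)`,
`r = √(ρ - τ)`, `z1 = (c1 - x)/r`, `z2 = (c2 - x)/r`. -/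
noncomputable def Ifun (σ : ℝ → ℝ) (c1 c2 t x : ℝ) : ℝ :=
  let r := Real.sqrt ((∫ u in (0:ℝ)..1, (σ u) ^ 2) - ∫ u in (0:ℝ)..t, (σ u) ^ 2)
  let z1 := (c1 - x) / r
  let z2 := (c2 - x) / r
  (Φ' z1 - Φ' z2) ^ 2 / (r * (Φ z2 - Φ z1) * (Φ (-z2) + Φ z1))

/-- the integrals `∫_ℝ I(x,t) dx` are uniformly bounded for `t ∈ [0,1)`. -/
theorem uniform_bound_I (σ : ℝ → ℝ) (hσ : Measurable σ) (s1 s2 : ℝ) (hs1 : 0 < s1)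
    (hσbd : ∀ u ∈ Set.Icc (0:ℝ) 1, s1 ≤ σ u ∧ σ u ≤ s2)
    (c1 c2 : ℝ) (hc : c1 < c2) :
    ∃ C : ℝ, ∀ t ∈ Set.Ico (0:ℝ) 1,
      Integrable (fun x : ℝ => Ifun σ c1 c2 t x) volume ∧
      (∫ x : ℝ, Ifun σ c1 c2 t x) ≤ C := by

  have h0mem : (0:ℝ) ∈ Set.Icc (0:ℝ) 1 := by norm_num
  have hs2 : 0 < s2 := lt_of_lt_of_le hs1 (le_trans (hσbd 0 h0mem).1 (hσbd 0 h0mem).2)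
  set δ0 : ℝ := (c2 - c1) / s2 with hδ0def
  have hδ0 : 0 < δ0 := div_pos (by linarith) hs2
  obtain ⟨K, hK0, hKmaster⟩ := master δ0 hδ0
  refine ⟨2 * K * ∫ z, hfun z, ?_⟩
  intro t ht
  obtain ⟨ht0, ht1⟩ := ht
  -- integrability of σ² on [0,1]
  have hmeas : Measurable fun u : ℝ => (σ u) ^ 2 := hσ.pow_const 2
  have hii : IntegrableOn (fun u : ℝ => (σ u) ^ 2) (Icc (0:ℝ) 1) := by
    have hconst : IntegrableOn (fun _ : ℝ => s2 ^ 2) (Icc (0:ℝ) 1) :=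
      integrableOn_const (by rw [Real.volume_Icc]; exact ENNReal.ofReal_ne_top)
    apply hconst.mono' hmeas.aestronglyMeasurable
    rw [ae_restrict_iff' measurableSet_Icc]
    refine ae_of_all _ fun u hu => ?_
    obtain ⟨hu1, hu2⟩ := hσbd u hu
    rw [Real.norm_eq_abs, abs_of_nonneg (by positivity)]
    nlinarith
  have hIIa : ∀ a b : ℝ, a ∈ Icc (0:ℝ) 1 → b ∈ Icc (0:ℝ) 1 →
      IntervalIntegrable (fun u : ℝ => (σ u) ^ 2) volume a b := by
    intro a b ha hb
    apply IntegrableOn.intervalIntegrable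
    apply hii.mono_set
    rw [show Icc (0:ℝ) 1 = Set.uIcc (0:ℝ) 1 from (Set.uIcc_of_le (by norm_num)).symm] at ha hb ⊢
    exact Set.uIcc_subset_uIcc ha hb
  have htmem : t ∈ Icc (0:ℝ) 1 := ⟨ht0, ht1.le⟩
  have h1mem : (1:ℝ) ∈ Icc (0:ℝ) 1 := by norm_num
  have hsub : (∫ u in (0:ℝ)..1, (σ u)^2) - (∫ u in (0:ℝ)..t, (σ u)^2) = ∫ u in t..1, (σ u)^2 :=
    intervalIntegral.integral_interval_sub_left (hIIa 0 1 h0mem h1mem) (hIIa 0 t h0mem htmem)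
  have hlb : s1^2 * (1 - t) ≤ ∫ u in t..1, (σ u)^2 := by
    have hconst : (∫ _u in t..1, s1^2) = s1^2 * (1 - t) := by
      rw [intervalIntegral.integral_const, smul_eq_mul]; ring
    rw [← hconst]
    apply intervalIntegral.integral_mono_on ht1.le intervalIntegrable_const (hIIa t 1 htmem h1mem)
    intro u hu
    obtain ⟨hu1, hu2⟩ := hσbd u ⟨le_trans ht0 hu.1, hu.2⟩
    nlinarith
  have hub : (∫ u in t..1, (σ u)^2) ≤ s2^2 := by
    have hconst : (∫ _u in t..1, s2^2) = s2^2 * (1 - t) := by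
      rw [intervalIntegral.integral_const, smul_eq_mul]; ring
    have hmono : (∫ u in t..1, (σ u)^2) ≤ ∫ _u in t..1, s2^2 := by
      apply intervalIntegral.integral_mono_on ht1.le (hIIa t 1 htmem h1mem) intervalIntegrable_const
      intro u hu
      obtain ⟨hu1, hu2⟩ := hσbd u ⟨le_trans ht0 hu.1, hu.2⟩
      nlinarith
    rw [hconst] at hmono
    nlinarith
  set r : ℝ := Real.sqrt ((∫ u in (0:ℝ)..1, (σ u) ^ 2) - ∫ u in (0:ℝ)..t, (σ u) ^ 2) with hrdef
  have hrpos : 0 < r := by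
    rw [hrdef]
    refine Real.sqrt_pos.2 (by rw [hsub]; nlinarith [hlb, mul_pos (pow_pos hs1 2) (show (0:ℝ) < 1 - t by linarith)])
  have hrs2 : r ≤ s2 := by
    rw [hrdef]
    calc Real.sqrt _ ≤ Real.sqrt (s2^2) := Real.sqrt_le_sqrt (by rw [hsub]; exact hub)
      _ = s2 := Real.sqrt_sq hs2.le
  have hIfun : ∀ x : ℝ, Ifun σ c1 c2 t x =
      (Φ' ((c1 - x)/r) - Φ' ((c2 - x)/r)) ^ 2 /
        (r * (Φ ((c2 - x)/r) - Φ ((c1 - x)/r)) * (Φ (-((c2 - x)/r)) + Φ ((c1 - x)/r))) :=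
    fun x => rfl
  have hδr : ∀ x : ℝ, (c1 - x)/r + δ0 ≤ (c2 - x)/r := by
    intro x
    have h1 : δ0 ≤ (c2 - c1)/r := by
      rw [hδ0def, div_le_div_iff₀ hs2 hrpos]
      exact mul_le_mul_of_nonneg_left hrs2 (show (0:ℝ) ≤ c2 - c1 by linarith)
    have h2 : (c2 - x)/r - (c1 - x)/r = (c2 - c1)/r := by
      rw [div_sub_div_same]; ring_nf
    linarith
  have hDpos : ∀ x : ℝ, 0 < Φ ((c2 - x)/r) - Φ ((c1 - x)/r) := fun x =>
    sub_pos.2 (Φ_strict (by linarith [hδr x]))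
  have hEpos : ∀ x : ℝ, 0 < Φ (-((c2 - x)/r)) + Φ ((c1 - x)/r) := fun x =>
    add_pos (Φ_pos _) (Φ_pos _)
  have hpt : ∀ x : ℝ, Ifun σ c1 c2 t x ≤
      K * (hfun ((c1 - x)/r) + hfun ((c2 - x)/r)) / r := by
    intro x
    rw [hIfun x,
      div_le_div_iff₀ (mul_pos (mul_pos hrpos (hDpos x)) (hEpos x)) hrpos]
    have hm := hKmaster _ _ (hδr x)
    calc (Φ' ((c1-x)/r) - Φ' ((c2-x)/r))^2 * r
        ≤ (K * (hfun ((c1-x)/r) + hfun ((c2-x)/r)) *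
            ((Φ ((c2-x)/r) - Φ ((c1-x)/r)) * (Φ (-((c2-x)/r)) + Φ ((c1-x)/r)))) * r :=
          mul_le_mul_of_nonneg_right hm hrpos.le
      _ = K * (hfun ((c1-x)/r) + hfun ((c2-x)/r)) *
            (r * (Φ ((c2-x)/r) - Φ ((c1-x)/r)) * (Φ (-((c2-x)/r)) + Φ ((c1-x)/r))) := by
          ring
  have hint1 : Integrable fun x : ℝ => hfun ((c1 - x)/r) := by
    have h0 : Integrable fun y : ℝ => hfun (y / r) := hfun_int.comp_div hrpos.ne'
    exact h0.comp_sub_left c1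
  have hint2 : Integrable fun x : ℝ => hfun ((c2 - x)/r) := by
    have h0 : Integrable fun y : ℝ => hfun (y / r) := hfun_int.comp_div hrpos.ne'
    exact h0.comp_sub_left c2
  have hg_int : Integrable fun x : ℝ => K * (hfun ((c1 - x)/r) + hfun ((c2 - x)/r)) / r :=
    ((hint1.add hint2).const_mul K).div_const r
  have hIfun_nonneg : ∀ x, 0 ≤ Ifun σ c1 c2 t x := fun x => by
    rw [hIfun x]
    exact div_nonneg (sq_nonneg _) (le_of_lt (mul_pos (mul_pos hrpos (hDpos x)) (hEpos x)))
  have hz1c : Continuous fun x : ℝ => (c1 - x)/r := by fun_prop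
  have hz2c : Continuous fun x : ℝ => (c2 - x)/r := by fun_prop
  have hcont : Continuous fun x : ℝ => Ifun σ c1 c2 t x := by
    rw [show (fun x : ℝ => Ifun σ c1 c2 t x) = fun x : ℝ =>
        (Φ' ((c1 - x)/r) - Φ' ((c2 - x)/r)) ^ 2 /
        (r * (Φ ((c2 - x)/r) - Φ ((c1 - x)/r)) * (Φ (-((c2 - x)/r)) + Φ ((c1 - x)/r)))
      from funext hIfun]
    apply Continuous.div
    · exact ((phi'_cont.comp hz1c).sub (phi'_cont.comp hz2c)).pow 2
    · exact (continuous_const.mul ((Φ_cont.comp hz2c).sub (Φ_cont.comp hz1c))).mul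
        ((Φ_cont.comp hz2c.neg).add (Φ_cont.comp hz1c))
    · intro x
      exact ne_of_gt (mul_pos (mul_pos hrpos (hDpos x)) (hEpos x))
  have hIfun_int : Integrable fun x : ℝ => Ifun σ c1 c2 t x := by
    apply hg_int.mono' hcont.aestronglyMeasurable
    refine ae_of_all _ fun x => ?_
    rw [Real.norm_eq_abs, abs_of_nonneg (hIfun_nonneg x)]
    exact hpt x
  refine ⟨hIfun_int, ?_⟩
  have hIg := integral_mono hIfun_int hg_int hpt
  have e1 : (∫ x : ℝ, hfun ((c1 - x)/r)) = r * ∫ z, hfun z := by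
    have h1 : (∫ x : ℝ, hfun ((c1 - x)/r)) = ∫ y : ℝ, hfun (y / r) :=
      integral_sub_left_eq_self (fun y : ℝ => hfun (y / r)) volume c1
    rw [h1, Measure.integral_comp_div hfun r, smul_eq_mul, abs_of_pos hrpos]
  have e2 : (∫ x : ℝ, hfun ((c2 - x)/r)) = r * ∫ z, hfun z := by
    have h1 : (∫ x : ℝ, hfun ((c2 - x)/r)) = ∫ y : ℝ, hfun (y / r) :=
      integral_sub_left_eq_self (fun y : ℝ => hfun (y / r)) volume c2
    rw [h1, Measure.integral_comp_div hfun r, smul_eq_mul, abs_of_pos hrpos]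
  have egint : (∫ x : ℝ, K * (hfun ((c1 - x)/r) + hfun ((c2 - x)/r)) / r)
      = 2 * K * ∫ z, hfun z := by
    have hfe : (fun x : ℝ => K * (hfun ((c1 - x)/r) + hfun ((c2 - x)/r)) / r)
        = fun x : ℝ => (K / r) * (hfun ((c1 - x)/r) + hfun ((c2 - x)/r)) :=
      funext fun x => by ring
    rw [hfe, integral_const_mul, integral_add hint1 hint2, e1, e2]
    field_simp
    ring
  rw [← egint]
  exact hIg
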